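/- Identify ℝ² with ℂ and let H² = {z ∈ ℂ : Im z > 0}. Let a,b,c,d ∈ ℝ with a·d − b·c = 1 and c ≠ 0, and let f(z) = (a·z+b)/(c·z+d), which is a Möbius transformation of H² onto itself. Then for all distinct x,y ∈ H², v_{H²}(f(x),f(y)) ≤ 2·v_{H²}(x,y), and the supremum over all distinct x,y ∈ H² of the ratio v_{H²}(f(x),f(y))/v_{H²}(x,y) equals 2. -/

import Mathlib

open EuclideanGeometry Real Set

/-- The visual angle metric on a planar domain `G ⊊ ℂ`:
`v_G(x,y) = sup_{z ∈ ∂G} ∠(x,z,y)`. -/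
noncomputable def visualAngleC (G : Set ℂ) (x y : ℂ) : ℝ :=
  sSup ((fun z => EuclideanGeometry.angle x z y) '' frontier G)

/-- The upper half plane `H² = {z ∈ ℂ : Im z > 0}`. -/
def upperHalfC : Set ℂ := {z | 0 < z.im}

/-- The real Möbius transformation `z ↦ (az+b)/(cz+d)` of the upper half plane. -/
noncomputable def realMoebius (a b c d : ℝ) (z : ℂ) : ℂ :=
  ((a : ℂ) * z + (b : ℂ)) / ((c : ℂ) * z + (d : ℂ))

section Aux
open Complex

attribute [local instance] Complex.finrank_real_complex_fact

lemma vam_abs_arg_mul_le {u v : ℂ} (hu : u ≠ 0) (hv : v ≠ 0) :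
    |(u * v).arg| ≤ |u.arg| + |v.arg| := by
  rcases le_or_gt π (|u.arg| + |v.arg|) with hle | hlt
  · exact (Complex.abs_arg_le_pi _).trans hle
  · have habs : |u.arg + v.arg| < π := (abs_add_le _ _).trans_lt hlt
    rw [abs_lt] at habs
    rw [Complex.arg_mul hu hv ⟨habs.1, habs.2.le⟩]
    exact abs_add_le _ _

lemma vam_angle_eq_abs_arg {u v : ℂ} (hu : u ≠ 0) (hv : v ≠ 0) :
    InnerProductGeometry.angle u v = |(v / u).arg| := by
  rw [Complex.orientation.angle_eq_abs_oangle_toReal hu hv]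
  have h1 : Complex.orientation.oangle u v = ((v / u).arg : Real.Angle) := by
    rw [Orientation.oangle, Complex.kahler]
    have h2 : v * (starRingEnd ℂ) u = ((Complex.normSq u : ℝ) : ℂ) * (v / u) := by
      rw [← Complex.mul_conj u]
      field_simp
    rw [h2, Complex.arg_real_mul _ (Complex.normSq_pos.2 hu)]
  rw [h1, Complex.arg_coe_angle_toReal_eq_arg]

lemma vam_angle_eq {p q s : ℂ} (hp : p ≠ q) (hs : s ≠ q) :
    EuclideanGeometry.angle p q s = |((s - q) / (p - q)).arg| := by
  rw [EuclideanGeometry.angle, vsub_eq_sub, vsub_eq_sub]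
  exact vam_angle_eq_abs_arg (sub_ne_zero.2 hp) (sub_ne_zero.2 hs)

lemma vam_frontier : frontier upperHalfC = {z : ℂ | z.im = 0} := by
  have h1 : upperHalfC = Complex.im ⁻¹' Ioi (0:ℝ) := rfl
  rw [h1, ← Complex.isOpenMap_im.preimage_frontier_eq_frontier_preimage
    Complex.continuous_im, frontier_Ioi]
  ext z
  simp

lemma vam_mem_frontier (r : ℝ) : (r : ℂ) ∈ frontier upperHalfC := by
  rw [vam_frontier]; simp

lemma vam_bdd (x y : ℂ) :
    BddAbove ((fun z => EuclideanGeometry.angle x z y) '' frontier upperHalfC) :=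
  ⟨π, by rintro _ ⟨z, _, rfl⟩; exact EuclideanGeometry.angle_le_pi _ _ _⟩

lemma vam_le (x y : ℂ) (r : ℝ) :
    EuclideanGeometry.angle x (r : ℂ) y ≤ visualAngleC upperHalfC x y :=
  le_csSup (vam_bdd x y) ⟨(r : ℂ), vam_mem_frontier r, rfl⟩

lemma vam_nonneg (x y : ℂ) : 0 ≤ visualAngleC upperHalfC x y :=
  (EuclideanGeometry.angle_nonneg _ _ _).trans (vam_le x y 0)

lemma vam_arccos_le {s t : ℝ} (h : s ≤ t) : Real.arccos t ≤ Real.arccos s := by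
  simp only [Real.arccos]
  have := Real.monotone_arcsin h
  linarith

lemma vam_den_ne {c d : ℝ} (hc : c ≠ 0) {x : ℂ} (hx : x.im ≠ 0) :
    (c : ℂ) * x + (d : ℂ) ≠ 0 := by
  intro H
  have h2 := congrArg Complex.im H
  simp [Complex.add_im, Complex.mul_im] at h2
  rcases h2 with h2 | h2
  · exact hc h2
  · exact hx h2

lemma vam_moebius_im (a b c d : ℝ) (h : a * d - b * c = 1) (x : ℂ) :
    (realMoebius a b c d x).im = x.im / Complex.normSq ((c : ℂ) * x + d) := by
  rw [realMoebius, Complex.div_im, div_sub_div_same]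
  congr 1
  simp only [Complex.add_im, Complex.add_re, Complex.mul_im, Complex.mul_re,
    Complex.ofReal_re, Complex.ofReal_im]
  ring_nf
  linear_combination x.im * h

lemma vam_moebius_mem {a b c d : ℝ} (h : a * d - b * c = 1) (hc : c ≠ 0) {x : ℂ}
    (hx : x ∈ upperHalfC) : realMoebius a b c d x ∈ upperHalfC := by
  have hx' : 0 < x.im := hx
  have hne : (c : ℂ) * x + d ≠ 0 := vam_den_ne hc (ne_of_gt hx')
  have hpos : 0 < Complex.normSq ((c : ℂ) * x + d) := Complex.normSq_pos.2 hne
  show 0 < (realMoebius a b c d x).im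
  rw [vam_moebius_im a b c d h x]
  exact div_pos hx' hpos

lemma vam_moebius_sub {a b c d : ℝ} (h : a * d - b * c = 1) {p q : ℂ}
    (hp : (c : ℂ) * p + d ≠ 0) (hq : (c : ℂ) * q + d ≠ 0) :
    realMoebius a b c d p - realMoebius a b c d q
      = (p - q) / (((c : ℂ) * p + d) * ((c : ℂ) * q + d)) := by
  have hC : (a : ℂ) * d - b * c = 1 := by
    have := congrArg (Complex.ofReal) h
    push_cast at this
    exact this
  rw [realMoebius, realMoebius, div_sub_div _ _ hp hq, div_eq_div_iff (mul_ne_zero hp hq)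
    (mul_ne_zero hp hq)]
  ring_nf
  linear_combination (p - q) * ((c:ℂ) * p + d) * ((c:ℂ) * q + d) * hC

end Aux

section Key
open Complex

lemma vam_ne_real {x : ℂ} (hx : x ∈ upperHalfC) (r : ℝ) : x ≠ (r : ℂ) := by
  intro H
  have h2 : x.im = 0 := by rw [H]; simp
  exact absurd h2 (ne_of_gt hx)

lemma vam_div_div {A B C D : ℂ} (hB : B ≠ 0) (hC : C ≠ 0) (hD : D ≠ 0) :
    (A / B) / (C / D) = (A / C) * (D / B) := by
  rw [div_div_div_comm, div_div_eq_mul_div, mul_div_assoc]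

lemma vam_key {a b c d : ℝ} (h : a * d - b * c = 1) (hc : c ≠ 0) {x y : ℂ}
    (hx : x ∈ upperHalfC) (hy : y ∈ upperHalfC) (r : ℝ) :
    EuclideanGeometry.angle (realMoebius a b c d x) (r : ℂ) (realMoebius a b c d y) ≤
      2 * visualAngleC upperHalfC x y := by
  have hxim : 0 < x.im := hx
  have hyim : 0 < y.im := hy
  have hcC : (c : ℂ) ≠ 0 := by exact_mod_cast hc
  have hcx : (c : ℂ) * x + d ≠ 0 := vam_den_ne hc (ne_of_gt hxim)
  have hcy : (c : ℂ) * y + d ≠ 0 := vam_den_ne hc (ne_of_gt hyim)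
  have hfx : realMoebius a b c d x ∈ upperHalfC := vam_moebius_mem h hc hx
  have hfy : realMoebius a b c d y ∈ upperHalfC := vam_moebius_mem h hc hy
  have hfxr : realMoebius a b c d x ≠ (r : ℂ) := vam_ne_real hfx r
  have hfyr : realMoebius a b c d y ≠ (r : ℂ) := vam_ne_real hfy r
  have hC : (a : ℂ) * d - b * c = 1 := by
    have h2 := congrArg (Complex.ofReal) h; push_cast at h2; exact h2
  have hvnn : 0 ≤ visualAngleC upperHalfC x y := vam_nonneg x y
  set w : ℂ := ((c : ℂ) * x + d) / ((c : ℂ) * y + d) with hw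
  have hwne : w ≠ 0 := div_ne_zero hcx hcy
  set q : ℂ := ((-(d / c) : ℝ) : ℂ) with hqdef
  have hq : q = -((d : ℂ) / c) := by rw [hqdef]; push_cast; ring
  have hxq : x ≠ q := vam_ne_real hx _
  have hyq : y ≠ q := vam_ne_real hy _
  have hxq' : x - q = ((c : ℂ) * x + d) / c := by rw [hq]; field_simp; ring
  have hyq' : y - q = ((c : ℂ) * y + d) / c := by rw [hq]; field_simp; ring
  have hqw : (y - q) / (x - q) = w⁻¹ := by
    rw [hxq', hyq', hw, inv_div, vam_div_div hcC hcx hcC, div_self hcC, mul_one]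
  have hangleq : EuclideanGeometry.angle x q y = |w.arg| := by
    rw [vam_angle_eq hxq hyq, hqw, Complex.abs_arg_inv]
  have hlw : |w.arg| ≤ visualAngleC upperHalfC x y := by
    rw [← hangleq]; exact vam_le x y _
  by_cases hr : r = a / c
  · -- the exceptional boundary point f(∞) = a/c
    have hfxs : realMoebius a b c d x - (r : ℂ) = -1 / (((c : ℂ) * x + d) * c) := by
      rw [hr, realMoebius]
      push_cast
      rw [div_sub_div _ _ hcx hcC]
      have hnum : ((a : ℂ) * x + b) * c - ((c : ℂ) * x + d) * a = -1 := by
        linear_combination -hC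
      rw [hnum]
    have hfys : realMoebius a b c d y - (r : ℂ) = -1 / (((c : ℂ) * y + d) * c) := by
      rw [hr, realMoebius]
      push_cast
      rw [div_sub_div _ _ hcy hcC]
      have hnum : ((a : ℂ) * y + b) * c - ((c : ℂ) * y + d) * a = -1 := by
        linear_combination -hC
      rw [hnum]
    have hratio : (realMoebius a b c d y - (r : ℂ)) / (realMoebius a b c d x - (r : ℂ))
        = w := by
      rw [hfxs, hfys, hw, vam_div_div (mul_ne_zero hcy hcC) (by norm_num)
        (mul_ne_zero hcx hcC), div_self (by norm_num : (-1 : ℂ) ≠ 0), one_mul,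
        mul_div_mul_right _ _ hcC]
    have h5 : EuclideanGeometry.angle (realMoebius a b c d x) (r : ℂ)
        (realMoebius a b c d y) = |w.arg| := by
      rw [vam_angle_eq hfxr hfyr, hratio]
    rw [h5]
    linarith
  · -- generic boundary point r = f(z)
    have hacr : a - c * r ≠ 0 := by
      intro H
      apply hr
      field_simp
      linarith
    set z : ℝ := (d * r - b) / (a - c * r) with hzdef
    have hzr : z * (a - c * r) = d * r - b := by
      rw [hzdef]; exact div_mul_cancel₀ _ hacr
    have hczd : c * z + d = 1 / (a - c * r) := by
      rw [hzdef]; field_simp; linear_combination h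
    have hcz : (c : ℂ) * (z : ℂ) + d ≠ 0 := by
      have h2 : ((c * z + d : ℝ) : ℂ) = (c : ℂ) * (z : ℂ) + d := by push_cast; ring
      rw [← h2, hczd]
      simp only [ne_eq, Complex.ofReal_eq_zero]
      exact one_div_ne_zero hacr
    have hfz : realMoebius a b c d (z : ℂ) = (r : ℂ) := by
      rw [realMoebius, div_eq_iff hcz]
      have h2 := congrArg (Complex.ofReal) hzr
      push_cast at h2
      linear_combination h2
    have hfxz := vam_moebius_sub h hcx hcz
    have hfyz := vam_moebius_sub h hcy hcz
    rw [hfz] at hfxz hfyz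
    have hxz : x ≠ (z : ℂ) := vam_ne_real hx _
    have hyz : y ≠ (z : ℂ) := vam_ne_real hy _
    set u : ℂ := (y - (z : ℂ)) / (x - (z : ℂ)) with hu
    have hune : u ≠ 0 := div_ne_zero (sub_ne_zero.2 hyz) (sub_ne_zero.2 hxz)
    have hlu : |u.arg| ≤ visualAngleC upperHalfC x y := by
      have h2 : EuclideanGeometry.angle x (z : ℂ) y = |u.arg| := by
        rw [vam_angle_eq hxz hyz]
      rw [← h2]; exact vam_le x y _
    have hratio : (realMoebius a b c d y - (r : ℂ)) / (realMoebius a b c d x - (r : ℂ))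
        = u * w := by
      rw [hfxz, hfyz, vam_div_div (mul_ne_zero hcy hcz) (sub_ne_zero.2 hxz)
        (mul_ne_zero hcx hcz), hu, hw]
      congr 1
      rw [mul_comm ((c:ℂ) * x + d) _, mul_comm ((c:ℂ) * y + d) _,
        mul_div_mul_left _ _ hcz]
    have h5 : EuclideanGeometry.angle (realMoebius a b c d x) (r : ℂ)
        (realMoebius a b c d y) = |(u * w).arg| := by
      rw [vam_angle_eq hfxr hfyr, hratio]
    rw [h5]
    calc |(u * w).arg| ≤ |u.arg| + |w.arg| := vam_abs_arg_mul_le hune hwne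
    _ ≤ 2 * visualAngleC upperHalfC x y := by linarith

end Key

section Extremal
open Complex

lemma vam_part1 {a b c d : ℝ} (h : a * d - b * c = 1) (hc : c ≠ 0) {x y : ℂ}
    (hx : x ∈ upperHalfC) (hy : y ∈ upperHalfC) :
    visualAngleC upperHalfC (realMoebius a b c d x) (realMoebius a b c d y) ≤
      2 * visualAngleC upperHalfC x y := by
  apply Real.sSup_le
  · rintro θ ⟨z, hz, rfl⟩
    rw [vam_frontier] at hz
    have hz0 : z.im = 0 := hz
    have hz2 : z = ((z.re : ℝ) : ℂ) := Complex.ext (by simp) (by simpa using hz0)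
    simp only
    rw [hz2]
    exact vam_key h hc hx hy z.re
  · linarith [vam_nonneg x y]

lemma vam_sqrt_eval {p q : ℝ} (hq : 0 ≤ q) (hpq : p = q ^ 2) : Real.sqrt p = q := by
  rw [hpq, Real.sqrt_sq hq]

lemma vam_inner (u v : ℂ) : (inner ℝ u v : ℝ) = u.re * v.re + u.im * v.im := by
  rw [Complex.inner, Complex.mul_re]
  simp only [Complex.conj_re, Complex.conj_im]
  ring

lemma vam_angle_special (t : ℝ) :
    InnerProductGeometry.angle (((-t : ℝ) : ℂ) + 2 * Complex.I)
      (((-t : ℝ) : ℂ) + ((2⁻¹ : ℝ) : ℂ) * Complex.I) ≤ Real.arccos (4 / 5) := by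
  set u : ℂ := ((-t : ℝ) : ℂ) + 2 * Complex.I with hu
  set v : ℂ := ((-t : ℝ) : ℂ) + ((2⁻¹ : ℝ) : ℂ) * Complex.I with hv
  have hure : u.re = -t := by simp [hu]
  have huim : u.im = 2 := by simp [hu]
  have hvre : v.re = -t := by simp [hv]
  have hvim : v.im = 2⁻¹ := by simp [hv]
  have hinner : (inner ℝ u v : ℝ) = t ^ 2 + 1 := by
    rw [vam_inner, hure, huim, hvre, hvim]
    ring
  have hnu : ‖u‖ = Real.sqrt (t ^ 2 + 4) := by
    rw [Complex.norm_def, Complex.normSq_apply, hure, huim]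
    congr 1; ring
  have hnv : ‖v‖ = Real.sqrt (t ^ 2 + 4⁻¹) := by
    rw [Complex.norm_def, Complex.normSq_apply, hvre, hvim]
    congr 1; ring
  have hs : ‖u‖ * ‖v‖ = Real.sqrt ((t ^ 2 + 4) * (t ^ 2 + 4⁻¹)) := by
    rw [hnu, hnv, ← Real.sqrt_mul (by positivity)]
  have hspos : 0 < ‖u‖ * ‖v‖ := by
    rw [hs]
    apply Real.sqrt_pos.2
    positivity
  have hsle : ‖u‖ * ‖v‖ ≤ 5 / 4 * (t ^ 2 + 1) := by
    rw [hs]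
    have h1 : (t ^ 2 + 4) * (t ^ 2 + 4⁻¹) ≤ (5 / 4 * (t ^ 2 + 1)) ^ 2 := by
      nlinarith [sq_nonneg (t ^ 2 - 1)]
    calc Real.sqrt ((t ^ 2 + 4) * (t ^ 2 + 4⁻¹)) ≤ Real.sqrt ((5 / 4 * (t ^ 2 + 1)) ^ 2) :=
          Real.sqrt_le_sqrt h1
    _ = 5 / 4 * (t ^ 2 + 1) := Real.sqrt_sq (by positivity)
  have hkey : (4 : ℝ) / 5 ≤ (inner ℝ u v : ℝ) / (‖u‖ * ‖v‖) := by
    rw [hinner, le_div_iff₀ hspos]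
    nlinarith
  rw [InnerProductGeometry.angle]
  exact vam_arccos_le hkey

lemma vam_angle_special_eq :
    InnerProductGeometry.angle (((1 : ℝ) : ℂ) + 2 * Complex.I)
      (((1 : ℝ) : ℂ) + ((2⁻¹ : ℝ) : ℂ) * Complex.I) = Real.arccos (4 / 5) := by
  rw [InnerProductGeometry.angle]
  congr 1
  have hinner : (inner ℝ (((1 : ℝ) : ℂ) + 2 * Complex.I)
      (((1 : ℝ) : ℂ) + ((2⁻¹ : ℝ) : ℂ) * Complex.I) : ℝ) = 2 := by
    rw [vam_inner]
    simp
    norm_num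
  have hnu : ‖((1 : ℝ) : ℂ) + 2 * Complex.I‖ = Real.sqrt 5 := by
    rw [Complex.norm_def, Complex.normSq_apply]
    simp
    norm_num
  have hnv : ‖((1 : ℝ) : ℂ) + ((2⁻¹ : ℝ) : ℂ) * Complex.I‖ = Real.sqrt (5 / 4) := by
    rw [Complex.norm_def, Complex.normSq_apply]
    simp
    norm_num
  rw [hinner, hnu, hnv, ← Real.sqrt_mul (by norm_num)]
  rw [vam_sqrt_eval (p := 5 * (5 / 4)) (q := 5 / 2) (by norm_num) (by norm_num)]
  norm_num

lemma vam_angle_special2 :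
    InnerProductGeometry.angle (3 + 4 * Complex.I) (-3 + 4 * Complex.I)
      = Real.arccos (7 / 25) := by
  rw [InnerProductGeometry.angle]
  congr 1
  have hure : ((3 : ℂ) + 4 * Complex.I).re = 3 := by simp
  have huim : ((3 : ℂ) + 4 * Complex.I).im = 4 := by simp
  have hvre : ((-3 : ℂ) + 4 * Complex.I).re = -3 := by simp
  have hvim : ((-3 : ℂ) + 4 * Complex.I).im = 4 := by simp
  have hinner : (inner ℝ ((3 : ℂ) + 4 * Complex.I) ((-3 : ℂ) + 4 * Complex.I) : ℝ) = 7 := by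
    rw [vam_inner, hure, huim, hvre, hvim]; norm_num
  have hnu : ‖(3 : ℂ) + 4 * Complex.I‖ = 5 := by
    rw [Complex.norm_def, Complex.normSq_apply, hure, huim]
    rw [vam_sqrt_eval (q := 5) (by norm_num) (by norm_num)]
  have hnv : ‖(-3 : ℂ) + 4 * Complex.I‖ = 5 := by
    rw [Complex.norm_def, Complex.normSq_apply, hvre, hvim]
    rw [vam_sqrt_eval (q := 5) (by norm_num) (by norm_num)]
  rw [hinner, hnu, hnv]
  norm_num

lemma vam_double : Real.arccos (7 / 25) = 2 * Real.arccos (4 / 5) := by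
  have h1 : Real.cos (2 * Real.arccos (4 / 5)) = 7 / 25 := by
    rw [Real.cos_two_mul, Real.cos_arccos (by norm_num) (by norm_num)]
    norm_num
  have h2 : 0 ≤ 2 * Real.arccos (4 / 5) := by
    have := Real.arccos_nonneg (4 / 5); linarith
  have h3 : 2 * Real.arccos (4 / 5) ≤ π := by
    have := Real.arccos_le_pi_div_two.2 (by norm_num : (0:ℝ) ≤ 4 / 5)
    linarith
  rw [← h1, Real.arccos_cos h2 h3]

lemma vam_pos {x y : ℂ} (hx : x ∈ upperHalfC) (hy : y ∈ upperHalfC) (hxy : x ≠ y) :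
    0 < visualAngleC upperHalfC x y := by
  have hx0 : x ≠ ((0 : ℝ) : ℂ) := vam_ne_real hx 0
  have hy0 : y ≠ ((0 : ℝ) : ℂ) := vam_ne_real hy 0
  have hx1 : x ≠ ((1 : ℝ) : ℂ) := vam_ne_real hx 1
  have hy1 : y ≠ ((1 : ℝ) : ℂ) := vam_ne_real hy 1
  rcases lt_or_eq_of_le (vam_nonneg x y) with hpos | heq
  · exact hpos
  exfalso
  have h0 : EuclideanGeometry.angle x ((0 : ℝ) : ℂ) y = 0 := by
    have h2 := vam_le x y 0
    rw [← heq] at h2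
    exact le_antisymm h2 (EuclideanGeometry.angle_nonneg _ _ _)
  have h1 : EuclideanGeometry.angle x ((1 : ℝ) : ℂ) y = 0 := by
    have h2 := vam_le x y 1
    rw [← heq] at h2
    exact le_antisymm h2 (EuclideanGeometry.angle_nonneg _ _ _)
  rw [vam_angle_eq hx0 hy0, abs_eq_zero, Complex.arg_eq_zero_iff] at h0
  rw [vam_angle_eq hx1 hy1, abs_eq_zero, Complex.arg_eq_zero_iff] at h1
  have hxne : x - ((0 : ℝ) : ℂ) ≠ 0 := sub_ne_zero.2 hx0
  have hxne1 : x - ((1 : ℝ) : ℂ) ≠ 0 := sub_ne_zero.2 hx1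
  set k0 : ℝ := ((y - ((0 : ℝ) : ℂ)) / (x - ((0 : ℝ) : ℂ))).re with hk0
  set k1 : ℝ := ((y - ((1 : ℝ) : ℂ)) / (x - ((1 : ℝ) : ℂ))).re with hk1
  have e0 : (y - ((0 : ℝ) : ℂ)) / (x - ((0 : ℝ) : ℂ)) = (k0 : ℂ) :=
    Complex.ext (by simp [hk0]) (by simpa using h0.2)
  have e1 : (y - ((1 : ℝ) : ℂ)) / (x - ((1 : ℝ) : ℂ)) = (k1 : ℂ) :=
    Complex.ext (by simp [hk1]) (by simpa using h1.2)
  rw [div_eq_iff hxne] at e0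
  rw [div_eq_iff hxne1] at e1
  have him0 : y.im = k0 * x.im := by
    have := congrArg Complex.im e0
    simpa using this
  have him1 : y.im = k1 * x.im := by
    have := congrArg Complex.im e1
    simpa using this
  have hxim : x.im ≠ 0 := ne_of_gt hx
  have hk : k0 = k1 := by
    have : k0 * x.im = k1 * x.im := by rw [← him0, ← him1]
    exact mul_right_cancel₀ hxim this
  rw [← hk] at e1
  have hone : (1 : ℂ) = (k0 : ℂ) := by
    have ee0 := e0
    have ee1 := e1
    push_cast at ee0 ee1
    linear_combination ee0 - ee1
  have hk0one : k0 = 1 := by exact_mod_cast hone.symm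
  apply hxy
  rw [hk0one] at e0
  simp only [Complex.ofReal_zero, Complex.ofReal_one, sub_zero, one_mul] at e0
  exact e0.symm

end Extremal

theorem stmt4 (a b c d : ℝ) (h : a * d - b * c = 1) (hc : c ≠ 0) :
    (∀ x ∈ upperHalfC, ∀ y ∈ upperHalfC, x ≠ y →
      visualAngleC upperHalfC (realMoebius a b c d x) (realMoebius a b c d y) ≤
        2 * visualAngleC upperHalfC x y) ∧
    sSup {r : ℝ | ∃ x ∈ upperHalfC, ∃ y ∈ upperHalfC, x ≠ y ∧
      r = visualAngleC upperHalfC (realMoebius a b c d x) (realMoebius a b c d y) /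
            visualAngleC upperHalfC x y} = 2 := by
  have hc2 : (0 : ℝ) < c ^ 2 := by positivity
  have hC : (a : ℂ) * d - b * c = 1 := by
    have h2 := congrArg (Complex.ofReal) h; push_cast at h2; exact h2
  have hcC : (c : ℂ) ≠ 0 := by exact_mod_cast hc
  constructor
  · intro x hx y hy _
    exact vam_part1 h hc hx hy
  · set x₀ : ℂ := (((1 - c * d) / c ^ 2 : ℝ) : ℂ) + ((2 / c ^ 2 : ℝ) : ℂ) * Complex.I
      with hx0def
    set y₀ : ℂ := (((1 - c * d) / c ^ 2 : ℝ) : ℂ) + ((1 / (2 * c ^ 2) : ℝ) : ℂ) * Complex.I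
      with hy0def
    have hx0im : x₀.im = 2 / c ^ 2 := by
      rw [hx0def]
      simp only [Complex.add_im, Complex.ofReal_im, Complex.mul_im, Complex.ofReal_re,
        Complex.I_im, Complex.I_re]
      ring
    have hy0im : y₀.im = 1 / (2 * c ^ 2) := by
      rw [hy0def]
      simp only [Complex.add_im, Complex.ofReal_im, Complex.mul_im, Complex.ofReal_re,
        Complex.I_im, Complex.I_re]
      ring
    have hx0mem : x₀ ∈ upperHalfC := by
      show 0 < x₀.im
      rw [hx0im]; positivity
    have hy0mem : y₀ ∈ upperHalfC := by
      show 0 < y₀.im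
      rw [hy0im]; positivity
    have hne : x₀ ≠ y₀ := by
      intro H
      have h2 : x₀.im = y₀.im := by rw [H]
      rw [hx0im, hy0im] at h2
      field_simp at h2
      linarith
    have hsne : ((c ^ 2)⁻¹ : ℝ) ≠ 0 := by positivity
    have h10ne : ((10 : ℝ)⁻¹ : ℝ) ≠ 0 := by norm_num
    -- upper bound for v(x₀, y₀)
    have hA : ∀ r : ℝ, EuclideanGeometry.angle x₀ ((r : ℝ) : ℂ) y₀ ≤ Real.arccos (4 / 5) := by
      intro r
      rw [EuclideanGeometry.angle, vsub_eq_sub, vsub_eq_sub]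
      have h1 : x₀ - ((r : ℝ) : ℂ) =
          ((c ^ 2)⁻¹ : ℝ) • ((((-(c ^ 2 * r + c * d - 1)) : ℝ) : ℂ) + 2 * Complex.I) := by
        rw [Complex.real_smul, hx0def]
        push_cast
        field_simp [hcC]
        ring
      have h2 : y₀ - ((r : ℝ) : ℂ) =
          ((c ^ 2)⁻¹ : ℝ) • ((((-(c ^ 2 * r + c * d - 1)) : ℝ) : ℂ)
            + ((2⁻¹ : ℝ) : ℂ) * Complex.I) := by
        rw [Complex.real_smul, hy0def]
        push_cast
        field_simp [hcC]
        ring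
      rw [h1, h2, InnerProductGeometry.angle_smul_smul hsne]
      exact vam_angle_special _
    -- exact value at the pole -d/c
    have hW : EuclideanGeometry.angle x₀ ((-d / c : ℝ) : ℂ) y₀ = Real.arccos (4 / 5) := by
      rw [EuclideanGeometry.angle, vsub_eq_sub, vsub_eq_sub]
      have h1 : x₀ - ((-d / c : ℝ) : ℂ) =
          ((c ^ 2)⁻¹ : ℝ) • (((1 : ℝ) : ℂ) + 2 * Complex.I) := by
        rw [Complex.real_smul, hx0def]
        push_cast
        field_simp [hcC]
        ring
      have h2 : y₀ - ((-d / c : ℝ) : ℂ) =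
          ((c ^ 2)⁻¹ : ℝ) • (((1 : ℝ) : ℂ) + ((2⁻¹ : ℝ) : ℂ) * Complex.I) := by
        rw [Complex.real_smul, hy0def]
        push_cast
        field_simp [hcC]
        ring
      rw [h1, h2, InnerProductGeometry.angle_smul_smul hsne]
      exact vam_angle_special_eq
    have hvxy : visualAngleC upperHalfC x₀ y₀ = Real.arccos (4 / 5) := by
      apply le_antisymm
      · apply Real.sSup_le
        · rintro θ ⟨z, hz, rfl⟩
          rw [vam_frontier] at hz
          have hz0 : z.im = 0 := hz
          have hz2 : z = ((z.re : ℝ) : ℂ) := Complex.ext (by simp) (by simpa using hz0)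
          simp only
          rw [hz2]
          exact hA z.re
        · exact Real.arccos_nonneg _
      · rw [← hW]
        exact vam_le x₀ y₀ _
    -- the image pair
    have hcx0 : (c : ℂ) * x₀ + d ≠ 0 := vam_den_ne hc (ne_of_gt hx0mem)
    have hcy0 : (c : ℂ) * y₀ + d ≠ 0 := vam_den_ne hc (ne_of_gt hy0mem)
    have hfx0 : realMoebius a b c d x₀ - ((a / c - 2⁻¹ : ℝ) : ℂ) =
        ((10 : ℝ)⁻¹ : ℝ) • ((3 : ℂ) + 4 * Complex.I) := by
      rw [Complex.real_smul, sub_eq_iff_eq_add, realMoebius, div_eq_iff hcx0, hx0def]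
      push_cast
      field_simp [hcC]
      linear_combination (-20 * (c:ℂ)) * hC + (-16 * (c:ℂ)) * Complex.I_sq
    have hfy0 : realMoebius a b c d y₀ - ((a / c - 2⁻¹ : ℝ) : ℂ) =
        ((10 : ℝ)⁻¹ : ℝ) • ((-3 : ℂ) + 4 * Complex.I) := by
      rw [Complex.real_smul, sub_eq_iff_eq_add, realMoebius, div_eq_iff hcy0, hy0def]
      push_cast
      field_simp [hcC]
      linear_combination (-40 * (c:ℂ)) * hC + (-8 * (c:ℂ)) * Complex.I_sq
    have hw0angle : EuclideanGeometry.angle (realMoebius a b c d x₀)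
        ((a / c - 2⁻¹ : ℝ) : ℂ) (realMoebius a b c d y₀) = Real.arccos (7 / 25) := by
      rw [EuclideanGeometry.angle, vsub_eq_sub, vsub_eq_sub, hfx0, hfy0,
        InnerProductGeometry.angle_smul_smul h10ne]
      exact vam_angle_special2
    have hvf_ge : Real.arccos (7 / 25) ≤
        visualAngleC upperHalfC (realMoebius a b c d x₀) (realMoebius a b c d y₀) := by
      rw [← hw0angle]
      exact vam_le _ _ _
    have hvf_le := vam_part1 h hc hx0mem hy0mem
    have hveq : visualAngleC upperHalfC (realMoebius a b c d x₀) (realMoebius a b c d y₀)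
        = 2 * visualAngleC upperHalfC x₀ y₀ := by
      apply le_antisymm hvf_le
      rw [hvxy, ← vam_double]
      exact hvf_ge
    have harcpos : 0 < Real.arccos (4 / 5) := Real.arccos_pos.2 (by norm_num)
    have hgt : IsGreatest {r : ℝ | ∃ x ∈ upperHalfC, ∃ y ∈ upperHalfC, x ≠ y ∧
        r = visualAngleC upperHalfC (realMoebius a b c d x) (realMoebius a b c d y) /
          visualAngleC upperHalfC x y} 2 := by
      constructor
      · refine ⟨x₀, hx0mem, y₀, hy0mem, hne, ?_⟩
        rw [hveq, hvxy, mul_div_assoc, div_self (ne_of_gt harcpos), mul_one]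
      · rintro r ⟨x, hx, y, hy, hxy, rfl⟩
        rw [div_le_iff₀ (vam_pos hx hy hxy)]
        exact vam_part1 h hc hx hy
    exact hgt.csSup_eq
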